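/- Let G* be a colored 𝔯-partite graph on Ω, let h ≥ 1, and let δ be a function assigning a value in [0,∞) to each total color of G*, such that δ(c⃗) = 0 for every c⃗ ∈ TC₁(G*) and δ(c⃗) = 1 for every bad c⃗ ∈ TC₂(G*). Suppose that the counting equation P_{φ∈Φ(h)}[G*(φ(e)) = S(e) for all e ∈ 𝕍(S)] = ∏_{v∈𝕍₁(S)} d_{G*}(S⟨v⟩) · ∏_{e∈𝕍₂(S)} ( d_{G*}(S⟨e⟩) ±̇ δ(S⟨e⟩) ) holds for every S ∈ S_{h,G*} such that no e ∈ 𝕍(S) has bad total-color S⟨e⟩. Then the counting equation holds for every S ∈ S_{h,G*}. -/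

import Mathlib

open Finset
open scoped BigOperators Classical

/-! ## Framework: colored partite graphs, complexes, partitionwise maps,
regularization, relative densities and regularity (Ishigami's setting). -/

/-- Partitionwise maps `Φ(h)`: `h` sample vertices in each of the `r` parts. -/
abbrev PMap {r : ℕ} (Ω : Fin r → Type) (h : ℕ) : Type := ∀ i : Fin r, Fin h → Ω i

/-- The product weight of a partitionwise map (each sample independent). -/
noncomputable def pmapWeight {r : ℕ} (Ω : Fin r → Type) [∀ i, Fintype (Ω i)]
    (w : ∀ i, Ω i → ℝ) {h : ℕ} (φ : PMap Ω h) : ℝ :=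
  ∏ i : Fin r, ∏ a : Fin h, w i (φ i a)

/-- Expectation over a random partitionwise map in `Φ(h)`. -/
noncomputable def EPhi {r : ℕ} (Ω : Fin r → Type) [∀ i, Fintype (Ω i)]
    (w : ∀ i, Ω i → ℝ) (h : ℕ) (f : PMap Ω h → ℝ) : ℝ :=
  ∑ φ : PMap Ω h, pmapWeight Ω w φ * f φ

/-- Conditional expectation over a random partitionwise map in `Φ(h)`. -/
noncomputable def EPhiCond {r : ℕ} (Ω : Fin r → Type) [∀ i, Fintype (Ω i)]
    (w : ∀ i, Ω i → ℝ) (h : ℕ) (A : PMap Ω h → Prop) (f : PMap Ω h → ℝ) : ℝ :=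
  (∑ φ : PMap Ω h, if A φ then pmapWeight Ω w φ * f φ else 0) /
  (∑ φ : PMap Ω h, if A φ then pmapWeight Ω w φ else 0)

/-- A colored `𝔯`-partite graph on vertex sets `Ω i`: color sets `C1 i` (for vertices,
i.e. index-`{i}` edges) and `C2 i j` (for index-`{i,j}` edges), together with coloring
maps, symmetric in the two endpoints. -/
structure CGraph {r : ℕ} (Ω : Fin r → Type) (K₁ K₂ : Type) where
  C1 : Fin r → Finset K₁
  C2 : Fin r → Fin r → Finset K₂
  vCol : ∀ i, Ω i → K₁
  eCol : ∀ i j, Ω i → Ω j → K₂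
  eSymm : ∀ i j x y, eCol i j x y = eCol j i y x
  c2Symm : ∀ i j, C2 i j = C2 j i
  vMem : ∀ i x, vCol i x ∈ C1 i
  eMem : ∀ i j x y, eCol i j x y ∈ C2 i j

/-- `G` is `(b₁,b₂)`-colored: each color set `C_I` has at most `b_{|I|}` elements. -/
def CGraph.Bounded {r : ℕ} {Ω : Fin r → Type} {K₁ K₂ : Type}
    (G : CGraph Ω K₁ K₂) (b₁ b₂ : ℕ) : Prop :=
  (∀ i, (G.C1 i).card ≤ b₁) ∧ ∀ i j, i ≠ j → (G.C2 i j).card ≤ b₂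

/-- Relative density `d_G(c)` of a vertex (index-`{i}`) total color `c`:
the probability that a random vertex of `Ω i` has color `c`. -/
noncomputable def dV {r : ℕ} (Ω : Fin r → Type) [∀ i, Fintype (Ω i)]
    (w : ∀ i, Ω i → ℝ) {K₁ K₂ : Type} (G : CGraph Ω K₁ K₂) (i : Fin r) (c : K₁) : ℝ :=
  ∑ x : Ω i, if G.vCol i x = c then w i x else 0

/-- Relative density `d_G(c₂; ci, cj)` of an index-`{i,j}` total color:
the conditional probability that a random edge has color `c₂` given that its
endpoints have colors `ci`, `cj`. -/
noncomputable def dE {r : ℕ} (Ω : Fin r → Type) [∀ i, Fintype (Ω i)]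
    (w : ∀ i, Ω i → ℝ) {K₁ K₂ : Type} (G : CGraph Ω K₁ K₂) (i j : Fin r)
    (c₂ : K₂) (ci cj : K₁) : ℝ :=
  (∑ x : Ω i, ∑ y : Ω j,
      if G.eCol i j x y = c₂ ∧ G.vCol i x = ci ∧ G.vCol j y = cj then w i x * w j y else 0) /
  (∑ x : Ω i, ∑ y : Ω j, if G.vCol i x = ci ∧ G.vCol j y = cj then w i x * w j y else 0)

/-- A (simplicial) complex with `h` vertices in each of the `r` parts: a colored
partite graph where `none` is the (unique) invisible color of each index, and any
edge containing an invisible vertex is invisible. -/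
structure SComplex (r h : ℕ) (K₁ K₂ : Type) where
  vCol : Fin r → Fin h → Option K₁
  eCol : Fin r → Fin r → Fin h → Fin h → Option K₂
  eSymm : ∀ i j a b, eCol i j a b = eCol j i b a
  loopless : ∀ i a b, eCol i i a b = none
  down : ∀ i j a b, vCol i a = none → eCol i j a b = none

/-- `S ∈ S_{h,G}` : the visible colors of the complex `S` are (identified with)
colors of `G`. -/
def SComplex.MemS {r h : ℕ} {Ω : Fin r → Type} {K₁ K₂ : Type}
    (S : SComplex r h K₁ K₂) (G : CGraph Ω K₁ K₂) : Prop :=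
  (∀ i a c, S.vCol i a = some c → c ∈ G.C1 i) ∧
  (∀ i j a b c, S.eCol i j a b = some c → c ∈ G.C2 i j)

/-- `𝕍₁(S)`: the visible vertices of `S`. -/
noncomputable def V1 {r h : ℕ} {K₁ K₂ : Type} (S : SComplex r h K₁ K₂) :
    Finset (Fin r × Fin h) :=
  univ.filter fun p => S.vCol p.1 p.2 ≠ none

/-- `𝕍₂(S)`: the visible (size-2) edges of `S`, listed once each (`i < j`). -/
noncomputable def V2 {r h : ℕ} {K₁ K₂ : Type} (S : SComplex r h K₁ K₂) :
    Finset (Fin r × Fin r × Fin h × Fin h) :=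
  univ.filter fun q => q.1 < q.2.1 ∧ S.eCol q.1 q.2.1 q.2.2.1 q.2.2.2 ≠ none

/-- `d_G(S⟨v⟩)` for a vertex `v` of `S` (junk value `1` on invisible vertices). -/
noncomputable def dVS {r h : ℕ} (Ω : Fin r → Type) [∀ i, Fintype (Ω i)]
    (w : ∀ i, Ω i → ℝ) {K₁ K₂ : Type} (G : CGraph Ω K₁ K₂)
    (S : SComplex r h K₁ K₂) (p : Fin r × Fin h) : ℝ :=
  match S.vCol p.1 p.2 with
  | some c => dV Ω w G p.1 c
  | none => 1

/-- `d_G(S⟨e⟩)` for a size-2 edge `e` of `S` (junk value `1` on invisible edges). -/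
noncomputable def dES {r h : ℕ} (Ω : Fin r → Type) [∀ i, Fintype (Ω i)]
    (w : ∀ i, Ω i → ℝ) {K₁ K₂ : Type} (G : CGraph Ω K₁ K₂)
    (S : SComplex r h K₁ K₂) (q : Fin r × Fin r × Fin h × Fin h) : ℝ :=
  match S.eCol q.1 q.2.1 q.2.2.1 q.2.2.2, S.vCol q.1 q.2.2.1, S.vCol q.2.1 q.2.2.2 with
  | some c₂, some ci, some cj => dE Ω w G q.1 q.2.1 c₂ ci cj
  | _, _, _ => 1

/-- The event `G(φ(v)) = S(v)` for all visible vertices `v` of `S`. -/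
def vEvent {r h : ℕ} {Ω : Fin r → Type} {K₁ K₂ : Type} (G : CGraph Ω K₁ K₂)
    (S : SComplex r h K₁ K₂) (φ : PMap Ω h) : Prop :=
  ∀ p ∈ V1 S, some (G.vCol p.1 (φ p.1 p.2)) = S.vCol p.1 p.2

/-- The event `G(φ(e)) = S(e)` for all visible size-2 edges `e` of `S`. -/
def eEvent {r h : ℕ} {Ω : Fin r → Type} {K₁ K₂ : Type} (G : CGraph Ω K₁ K₂)
    (S : SComplex r h K₁ K₂) (φ : PMap Ω h) : Prop :=
  ∀ q ∈ V2 S, some (G.eCol q.1 q.2.1 (φ q.1 q.2.2.1) (φ q.2.1 q.2.2.2)) =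
    S.eCol q.1 q.2.1 q.2.2.1 q.2.2.2

/-- `P_{φ∈Φ(h)}[G(φ(e)) = S(e) for all e ∈ 𝕍(S)]`. -/
noncomputable def countProb {r h : ℕ} (Ω : Fin r → Type) [∀ i, Fintype (Ω i)]
    (w : ∀ i, Ω i → ℝ) {K₁ K₂ : Type} (G : CGraph Ω K₁ K₂)
    (S : SComplex r h K₁ K₂) : ℝ :=
  EPhi Ω w h fun φ => if vEvent G S φ ∧ eEvent G S φ then 1 else 0

/-- Value of an error function `δ` (defined on index-2 total colors) at `S⟨e⟩`. -/
noncomputable def deltaS {r h : ℕ} {K₁ K₂ : Type} (δ : Fin r → Fin r → K₂ → K₁ → K₁ → ℝ)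
    (S : SComplex r h K₁ K₂) (q : Fin r × Fin r × Fin h × Fin h) : ℝ :=
  match S.eCol q.1 q.2.1 q.2.2.1 q.2.2.2, S.vCol q.1 q.2.2.1, S.vCol q.2.1 q.2.2.2 with
  | some c₂, some ci, some cj => δ q.1 q.2.1 c₂ ci cj
  | _, _, _ => 0

/-- The counting equation (\ref{lj19}) for one complex `S`:
`P[G(φ(e)) = S(e) ∀ e ∈ 𝕍(S)] = ∏_{v∈𝕍₁(S)} d_G(S⟨v⟩) · ∏_{e∈𝕍₂(S)} (d_G(S⟨e⟩) ±̇ δ(S⟨e⟩))`,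
where `a ±̇ b` denotes a suitable number `c` with `max 0 (a-b) ≤ c ≤ min 1 (a+b)`. -/
def CountEqAt {r h : ℕ} (Ω : Fin r → Type) [∀ i, Fintype (Ω i)]
    (w : ∀ i, Ω i → ℝ) {K₁ K₂ : Type} (G : CGraph Ω K₁ K₂)
    (δ : Fin r → Fin r → K₂ → K₁ → K₁ → ℝ) (S : SComplex r h K₁ K₂) : Prop :=
  ∃ c : Fin r × Fin r × Fin h × Fin h → ℝ,
    (∀ q ∈ V2 S, max 0 (dES Ω w G S q - deltaS δ S q) ≤ c q ∧
        c q ≤ min 1 (dES Ω w G S q + deltaS δ S q)) ∧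
    countProb Ω w G S = (∏ p ∈ V1 S, dVS Ω w G S p) * ∏ q ∈ V2 S, c q

/-- `δ` is an `h`-error function of `G`: the counting equation holds for every
`S ∈ S_{h,G}`. -/
def IsErrorFun {r : ℕ} (Ω : Fin r → Type) [∀ i, Fintype (Ω i)]
    (w : ∀ i, Ω i → ℝ) {K₁ K₂ : Type} (G : CGraph Ω K₁ K₂) (h : ℕ)
    (δ : Fin r → Fin r → K₂ → K₁ → K₁ → ℝ) : Prop :=
  ∀ S : SComplex r h K₁ K₂, S.MemS G → CountEqAt Ω w G δ S

/-- `E_{e∈Ω_I}[δ(G⟨e⟩)]` for `I = {i,j}`. -/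
noncomputable def EdgeDeltaAvg {r : ℕ} (Ω : Fin r → Type) [∀ i, Fintype (Ω i)]
    (w : ∀ i, Ω i → ℝ) {K₁ K₂ : Type} (G : CGraph Ω K₁ K₂)
    (δ : Fin r → Fin r → K₂ → K₁ → K₁ → ℝ) (i j : Fin r) : ℝ :=
  ∑ x : Ω i, ∑ y : Ω j,
    w i x * w j y * δ i j (G.eCol i j x y) (G.vCol i x) (G.vCol j y)

/-- `G` is `(ε,h)`-regular. -/
def IsRegularG {r : ℕ} (Ω : Fin r → Type) [∀ i, Fintype (Ω i)]
    (w : ∀ i, Ω i → ℝ) {K₁ K₂ : Type} (G : CGraph Ω K₁ K₂) (h : ℕ) (ε : ℝ) : Prop :=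
  ∃ δ : Fin r → Fin r → K₂ → K₁ → K₁ → ℝ,
    (∀ i j c₂ ci cj, 0 ≤ δ i j c₂ ci cj) ∧
    IsErrorFun Ω w G h δ ∧
    ∀ i j : Fin r, i ≠ j → EdgeDeltaAvg Ω w G δ i j ≤ ε / (G.C2 i j).card

/-- `reg_h(G)`: the minimum `ε` such that `G` is `(ε,h)`-regular. -/
noncomputable def reg {r : ℕ} (Ω : Fin r → Type) [∀ i, Fintype (Ω i)]
    (w : ∀ i, Ω i → ℝ) {K₁ K₂ : Type} (G : CGraph Ω K₁ K₂) (h : ℕ) : ℝ :=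
  sInf {ε : ℝ | IsRegularG Ω w G h ε}

/-- The regularization `G/φ` of `G` by a partitionwise map `φ ∈ Φ(m)`: each vertex
`v ∈ Ω i` is recolored by its original color together with the colors of all edges
joining `v` to the sample points of `φ` in the other parts. Size-2 edges keep
their colors. -/
noncomputable def regz {r : ℕ} (Ω : Fin r → Type) [∀ i, Fintype (Ω i)]
    {K₁ K₂ : Type} [Fintype K₁] [Fintype K₂] (G : CGraph Ω K₁ K₂) {m : ℕ}
    (φ : PMap Ω m) : CGraph Ω (K₁ × (Fin r → Fin m → Option K₂)) K₂ where
  C1 i := univ.filter fun p : K₁ × (Fin r → Fin m → Option K₂) =>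
    p.1 ∈ G.C1 i ∧ ∀ j b, if j = i then p.2 j b = none
      else ∃ c ∈ G.C2 i j, p.2 j b = some c
  C2 := G.C2
  vCol i x := (G.vCol i x, fun j b => if j = i then none else some (G.eCol i j x (φ j b)))
  eCol := G.eCol
  eSymm := G.eSymm
  c2Symm := G.c2Symm
  vMem := by
    intro i x
    simp only [mem_filter, mem_univ, true_and]
    refine ⟨G.vMem i x, fun j b => ?_⟩
    by_cases hj : j = i
    · simp [hj]
    · simp only [hj, if_neg hj]
      exact ⟨G.eCol i j x (φ j b), G.eMem i j x (φ j b), rfl⟩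
  eMem := G.eMem

/-- Conditional expectation of `f` over a random pair `e = (x,y) ∈ Ω_{i} × Ω_{j}`
given the event `A`. -/
noncomputable def condEE {r : ℕ} (Ω : Fin r → Type) [∀ i, Fintype (Ω i)]
    (w : ∀ i, Ω i → ℝ) (i j : Fin r) (A : Ω i → Ω j → Prop) (f : Ω i → Ω j → ℝ) : ℝ :=
  (∑ x : Ω i, ∑ y : Ω j, if A x y then w i x * w j y * f x y else 0) /
  (∑ x : Ω i, ∑ y : Ω j, if A x y then w i x * w j y else 0)

/-- `e ≈_{∂(G/ψ)} e'` : the two pairs have the same frame color in the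
regularization `G/ψ`. -/
def frameRel {r : ℕ} (Ω : Fin r → Type) [∀ i, Fintype (Ω i)]
    {K₁ K₂ : Type} [Fintype K₁] [Fintype K₂] (G : CGraph Ω K₁ K₂) {m : ℕ}
    (ψ : PMap Ω m) (i j : Fin r) (x : Ω i) (y : Ω j) (x' : Ω i) (y' : Ω j) : Prop :=
  (regz Ω G ψ).vCol i x = (regz Ω G ψ).vCol i x' ∧
  (regz Ω G ψ).vCol j y = (regz Ω G ψ).vCol j y'

/-- `η(c₂; ci, cj)` (eq. (\ref{061220})) computed in `G`, with `N` random sample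
vertices in each part (`N = M·h` in the paper). -/
noncomputable def eta {r : ℕ} (Ω : Fin r → Type) [∀ i, Fintype (Ω i)]
    (w : ∀ i, Ω i → ℝ) {K₁ K₂ : Type} [Fintype K₁] [Fintype K₂]
    (G : CGraph Ω K₁ K₂) (N : ℕ) (i j : Fin r) (c₂ : K₂) (ci cj : K₁) : ℝ :=
  EPhi Ω w N fun ψ =>
    condEE Ω w i j (fun x' y' => G.vCol i x' = ci ∧ G.vCol j y' = cj) fun x' y' =>
      (condEE Ω w i j (fun x y => frameRel Ω G ψ i j x y x' y')
          (fun x y => if G.eCol i j x y = c₂ then 1 else 0) -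
        dE Ω w G i j c₂ ci cj) ^ 2

/-- `η(S⟨e⟩)` for a size-2 edge of a complex `S` (junk value `0` if invisible). -/
noncomputable def etaS {r h : ℕ} (Ω : Fin r → Type) [∀ i, Fintype (Ω i)]
    (w : ∀ i, Ω i → ℝ) {K₁ K₂ : Type} [Fintype K₁] [Fintype K₂]
    (G : CGraph Ω K₁ K₂) (N : ℕ) (S : SComplex r h K₁ K₂)
    (q : Fin r × Fin r × Fin h × Fin h) : ℝ :=
  match S.eCol q.1 q.2.1 q.2.2.1 q.2.2.2, S.vCol q.1 q.2.2.1, S.vCol q.2.1 q.2.2.2 with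
  | some c₂, some ci, some cj => eta Ω w G N q.1 q.2.1 c₂ ci cj
  | _, _, _ => 0

/-- `ε₁ := (ε/(6 b₂ binom(r,2)))²`. -/
noncomputable def eps1 (r b₂ : ℕ) (ε : ℝ) : ℝ := (ε / (6 * b₂ * r.choose 2)) ^ 2

/-- `C := √2 · binom(r,2) h² · (b₂/√ε₁)^{binom(r,2)h² − 1}`. -/
noncomputable def Cconst (r h b₂ : ℕ) (ε : ℝ) : ℝ :=
  Real.sqrt 2 * r.choose 2 * h ^ 2 *
    ((b₂ : ℝ) / Real.sqrt (eps1 r b₂ ε)) ^ (r.choose 2 * h ^ 2 - 1)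

/-- `M(m) := (b₁ b₂^{(r−1)m} / √ε₁)^{rh}` (as a sample count). -/
noncomputable def Mconst (r h b₁ b₂ : ℕ) (ε : ℝ) (m : ℕ) : ℕ :=
  ⌈(((b₁ : ℝ) * (b₂ : ℝ) ^ ((r - 1) * m)) / Real.sqrt (eps1 r b₂ ε)) ^ (r * h)⌉₊

/-- A vertex total color `c` of index `{i}` is bad. -/
def BadV {r : ℕ} (Ω : Fin r → Type) [∀ i, Fintype (Ω i)]
    (w : ∀ i, Ω i → ℝ) {K₁ K₂ : Type} (G : CGraph Ω K₁ K₂) (ε₁ : ℝ)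
    (i : Fin r) (c : K₁) : Prop :=
  dV Ω w G i c ≤ Real.sqrt ε₁ / (G.C1 i).card

/-- An index-`{i,j}` total color `(c₂; ci, cj)` is bad: some nonempty `I* ⊆ {i,j}`
has relative density at most `√ε₁/|C_{I*}|`. -/
def BadE {r : ℕ} (Ω : Fin r → Type) [∀ i, Fintype (Ω i)]
    (w : ∀ i, Ω i → ℝ) {K₁ K₂ : Type} (G : CGraph Ω K₁ K₂) (ε₁ : ℝ)
    (i j : Fin r) (c₂ : K₂) (ci cj : K₁) : Prop :=
  BadV Ω w G ε₁ i ci ∨ BadV Ω w G ε₁ j cj ∨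
    dE Ω w G i j c₂ ci cj ≤ Real.sqrt ε₁ / (G.C2 i j).card

/-- The error function `δ` of the paper: `1` on bad total colors, `C·√η` otherwise. -/
noncomputable def deltaDef {r : ℕ} (Ω : Fin r → Type) [∀ i, Fintype (Ω i)]
    (w : ∀ i, Ω i → ℝ) {K₁ K₂ : Type} [Fintype K₁] [Fintype K₂]
    (G : CGraph Ω K₁ K₂) (ε₁ Cc : ℝ) (N : ℕ)
    (i j : Fin r) (c₂ : K₂) (ci cj : K₁) : ℝ :=
  if BadE Ω w G ε₁ i j c₂ ci cj then 1 else Cc * Real.sqrt (eta Ω w G N i j c₂ ci cj)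

/-- `∏_{e∈D}(𝟙[G(φ(e)) = S(e)] − d_G(S⟨e⟩))`, single factor. -/
noncomputable def indMinusD {r h : ℕ} (Ω : Fin r → Type) [∀ i, Fintype (Ω i)]
    (w : ∀ i, Ω i → ℝ) {K₁ K₂ : Type} (G : CGraph Ω K₁ K₂)
    (S : SComplex r h K₁ K₂) (φ : PMap Ω h) (q : Fin r × Fin r × Fin h × Fin h) : ℝ :=
  (if some (G.eCol q.1 q.2.1 (φ q.1 q.2.2.1) (φ q.2.1 q.2.2.2)) =
      S.eCol q.1 q.2.1 q.2.2.1 q.2.2.2 then 1 else 0) - dES Ω w G S q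

/-- The total color `S⟨v⟩` of a vertex of the complex `S` is bad. -/
def BadVS {r h : ℕ} (Ω : Fin r → Type) [∀ i, Fintype (Ω i)]
    (w : ∀ i, Ω i → ℝ) {K₁ K₂ : Type} (G : CGraph Ω K₁ K₂) (ε₁ : ℝ)
    (S : SComplex r h K₁ K₂) (p : Fin r × Fin h) : Prop :=
  match S.vCol p.1 p.2 with
  | some c => BadV Ω w G ε₁ p.1 c
  | none => False

/-- The total color `S⟨e⟩` of a size-2 edge of the complex `S` is bad. -/
def BadES {r h : ℕ} (Ω : Fin r → Type) [∀ i, Fintype (Ω i)]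
    (w : ∀ i, Ω i → ℝ) {K₁ K₂ : Type} (G : CGraph Ω K₁ K₂) (ε₁ : ℝ)
    (S : SComplex r h K₁ K₂) (q : Fin r × Fin r × Fin h × Fin h) : Prop :=
  match S.eCol q.1 q.2.1 q.2.2.1 q.2.2.2, S.vCol q.1 q.2.2.1, S.vCol q.2.1 q.2.2.2 with
  | some c₂, some ci, some cj => BadE Ω w G ε₁ q.1 q.2.1 c₂ ci cj
  | _, _, _ => False

/-! ### Auxiliary material for Statement 13 -/

section Stmt13Aux

variable {r : ℕ} {Ω : Fin r → Type} [∀ i, Fintype (Ω i)] {w : ∀ i, Ω i → ℝ}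
  {K₁ K₂ : Type}

/-- Update a partitionwise map at a single coordinate. -/
noncomputable def updP {h : ℕ} (i₀ : Fin r) (a₀ : Fin h) (x : Ω i₀) (φ : PMap Ω h) :
    PMap Ω h :=
  Function.update φ i₀ (Function.update (φ i₀) a₀ x)

lemma updP_same {h : ℕ} (i₀ : Fin r) (a₀ : Fin h) (x : Ω i₀) (φ : PMap Ω h) :
    updP i₀ a₀ x φ i₀ a₀ = x := by
  simp [updP]

lemma updP_ne {h : ℕ} {i₀ i : Fin r} {a₀ a : Fin h} (hne : (i, a) ≠ (i₀, a₀))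
    (x : Ω i₀) (φ : PMap Ω h) : updP i₀ a₀ x φ i a = φ i a := by
  rcases eq_or_ne i i₀ with rfl | hi
  · have ha : a ≠ a₀ := fun h' => hne (by rw [h'])
    simp [updP, Function.update_of_ne ha]
  · simp [updP, Function.update_of_ne hi]

lemma updP_invol {h : ℕ} (i₀ : Fin r) (a₀ : Fin h) (x : Ω i₀) (φ : PMap Ω h) :
    updP i₀ a₀ (φ i₀ a₀) (updP i₀ a₀ x φ) = φ := by
  simp [updP, Function.update_idem, Function.update_eq_self]

lemma pmapWeight_nonneg (hw : ∀ i x, 0 ≤ w i x) {h : ℕ} (φ : PMap Ω h) :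
    0 ≤ pmapWeight Ω w φ :=
  Finset.prod_nonneg fun i _ => Finset.prod_nonneg fun a _ => hw i (φ i a)

lemma pmapWeight_updP {h : ℕ} (i₀ : Fin r) (a₀ : Fin h) (x : Ω i₀) (φ : PMap Ω h) :
    pmapWeight Ω w (updP i₀ a₀ x φ) * w i₀ (φ i₀ a₀) = pmapWeight Ω w φ * w i₀ x := by
  have key : ∀ ψ : PMap Ω h, pmapWeight Ω w ψ =
      (w i₀ (ψ i₀ a₀) * ∏ a ∈ univ.erase a₀, w i₀ (ψ i₀ a)) *
        ∏ i ∈ univ.erase i₀, ∏ a : Fin h, w i (ψ i a) := by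
    intro ψ
    rw [pmapWeight, ← Finset.mul_prod_erase univ _ (mem_univ i₀),
      ← Finset.mul_prod_erase univ _ (mem_univ a₀)]
  have h1 : ∀ a ∈ univ.erase a₀, w i₀ (updP i₀ a₀ x φ i₀ a) = w i₀ (φ i₀ a) := by
    intro a ha
    rw [updP_ne (fun hc => (Finset.mem_erase.mp ha).1 (congrArg Prod.snd hc)) x φ]
  have h2 : ∀ i ∈ univ.erase i₀, (∏ a : Fin h, w i (updP i₀ a₀ x φ i a)) =
      ∏ a : Fin h, w i (φ i a) := by
    intro i hi
    refine Finset.prod_congr rfl fun a _ => ?_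
    rw [updP_ne (fun hc => (Finset.mem_erase.mp hi).1 (congrArg Prod.fst hc)) x φ]
  rw [key (updP i₀ a₀ x φ), key φ, updP_same, Finset.prod_congr rfl h1,
    Finset.prod_congr rfl h2]
  ring

lemma single_fubini (htot : ∀ i, ∑ x : Ω i, w i x = 1) {h : ℕ} (i₀ : Fin r) (a₀ : Fin h)
    (H : PMap Ω h → ℝ) (hH : ∀ (φ : PMap Ω h) (x : Ω i₀), H (updP i₀ a₀ x φ) = H φ)
    (g : Ω i₀ → ℝ) :
    ∑ φ : PMap Ω h, pmapWeight Ω w φ * (H φ * g (φ i₀ a₀)) =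
      (∑ φ : PMap Ω h, pmapWeight Ω w φ * H φ) * ∑ x : Ω i₀, w i₀ x * g x := by
  have hinv : Function.Involutive
      (fun q : PMap Ω h × Ω i₀ => (updP i₀ a₀ q.2 q.1, q.1 i₀ a₀)) := by
    intro q
    simp [Prod.ext_iff, updP_invol, updP_same]
  calc
    ∑ φ : PMap Ω h, pmapWeight Ω w φ * (H φ * g (φ i₀ a₀))
        = (∑ φ : PMap Ω h, pmapWeight Ω w φ * (H φ * g (φ i₀ a₀))) *
            ∑ x : Ω i₀, w i₀ x := by rw [htot i₀, mul_one]
    _ = ∑ q : PMap Ω h × Ω i₀,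
          pmapWeight Ω w q.1 * (H q.1 * g (q.1 i₀ a₀)) * w i₀ q.2 := by
        rw [Finset.sum_mul_sum]
        simp only [Fintype.sum_prod_type]
    _ = ∑ q : PMap Ω h × Ω i₀,
          pmapWeight Ω w (updP i₀ a₀ q.2 q.1) *
            (H (updP i₀ a₀ q.2 q.1) * g (updP i₀ a₀ q.2 q.1 i₀ a₀)) *
              w i₀ (q.1 i₀ a₀) :=
        (Equiv.sum_comp (Function.Involutive.toPerm _ hinv)
          (fun q : PMap Ω h × Ω i₀ =>
            pmapWeight Ω w q.1 * (H q.1 * g (q.1 i₀ a₀)) * w i₀ q.2)).symm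
    _ = ∑ q : PMap Ω h × Ω i₀,
          (pmapWeight Ω w q.1 * H q.1) * (w i₀ q.2 * g q.2) := by
        refine Fintype.sum_congr _ _ fun q => ?_
        rw [hH, updP_same]
        calc
          pmapWeight Ω w (updP i₀ a₀ q.2 q.1) * (H q.1 * g q.2) * w i₀ (q.1 i₀ a₀)
              = pmapWeight Ω w (updP i₀ a₀ q.2 q.1) * w i₀ (q.1 i₀ a₀) *
                  (H q.1 * g q.2) := by ring
          _ = pmapWeight Ω w q.1 * w i₀ q.2 * (H q.1 * g q.2) := by
                rw [pmapWeight_updP]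
          _ = (pmapWeight Ω w q.1 * H q.1) * (w i₀ q.2 * g q.2) := by ring
    _ = (∑ φ : PMap Ω h, pmapWeight Ω w φ * H φ) * ∑ x : Ω i₀, w i₀ x * g x := by
        rw [Finset.sum_mul_sum]
        simp only [Fintype.sum_prod_type]

lemma multi_fubini (htot : ∀ i, ∑ x : Ω i, w i x = 1) {h : ℕ}
    (T : Finset (Fin r × Fin h)) (H : PMap Ω h → ℝ)
    (g : ∀ p : Fin r × Fin h, Ω p.1 → ℝ)
    (hH : ∀ p ∈ T, ∀ (φ : PMap Ω h) (x : Ω p.1), H (updP p.1 p.2 x φ) = H φ) :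
    ∑ φ : PMap Ω h, pmapWeight Ω w φ * (H φ * ∏ p ∈ T, g p (φ p.1 p.2)) =
      (∑ φ : PMap Ω h, pmapWeight Ω w φ * H φ) *
        ∏ p ∈ T, ∑ x : Ω p.1, w p.1 x * g p x := by
  classical
  induction T using Finset.induction_on with
  | empty => simp
  | @insert p₀ T' hp ih =>
    have hg : ∀ p ∈ T', ∀ (φ : PMap Ω h) (x : Ω p.1), H (updP p.1 p.2 x φ) = H φ :=
      fun p hp' => hH p (Finset.mem_insert_of_mem hp')
    have hH' : ∀ (φ : PMap Ω h) (x : Ω p₀.1),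
        (H (updP p₀.1 p₀.2 x φ) * ∏ p ∈ T', g p (updP p₀.1 p₀.2 x φ p.1 p.2)) =
          H φ * ∏ p ∈ T', g p (φ p.1 p.2) := by
      intro φ x
      rw [hH p₀ (Finset.mem_insert_self _ _)]
      congr 1
      refine Finset.prod_congr rfl fun p hp' => ?_
      have hne : (p.1, p.2) ≠ (p₀.1, p₀.2) := by
        intro hc
        apply hp
        have : p = p₀ := by
          rw [← Prod.mk.eta (p := p), hc]
        rwa [this] at hp'
      rw [updP_ne hne]
    calc
      ∑ φ : PMap Ω h, pmapWeight Ω w φ *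
          (H φ * ∏ p ∈ insert p₀ T', g p (φ p.1 p.2))
          = ∑ φ : PMap Ω h, pmapWeight Ω w φ *
              ((H φ * ∏ p ∈ T', g p (φ p.1 p.2)) * g p₀ (φ p₀.1 p₀.2)) := by
            refine Fintype.sum_congr _ _ fun φ => ?_
            rw [Finset.prod_insert hp]
            ring
      _ = (∑ φ : PMap Ω h, pmapWeight Ω w φ * (H φ * ∏ p ∈ T', g p (φ p.1 p.2))) *
            ∑ x : Ω p₀.1, w p₀.1 x * g p₀ x :=
          single_fubini htot p₀.1 p₀.2 _ hH' (g p₀)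
      _ = ((∑ φ : PMap Ω h, pmapWeight Ω w φ * H φ) *
            ∏ p ∈ T', ∑ x : Ω p.1, w p.1 x * g p x) * ∑ x : Ω p₀.1, w p₀.1 x * g p₀ x := by
          rw [ih hg]
      _ = (∑ φ : PMap Ω h, pmapWeight Ω w φ * H φ) *
            ∏ p ∈ insert p₀ T', ∑ x : Ω p.1, w p.1 x * g p x := by
          rw [Finset.prod_insert hp]
          ring

/-! #### Densities: basic bounds and symmetry -/

lemma dV_nonneg (hw : ∀ i x, 0 ≤ w i x) (G : CGraph Ω K₁ K₂) (i : Fin r) (c : K₁) :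
    0 ≤ dV Ω w G i c := by
  refine Finset.sum_nonneg fun x _ => ?_
  split_ifs
  · exact hw i x
  · exact le_rfl

lemma dE_nonneg (hw : ∀ i x, 0 ≤ w i x) (G : CGraph Ω K₁ K₂) (i j : Fin r)
    (c₂ : K₂) (ci cj : K₁) : 0 ≤ dE Ω w G i j c₂ ci cj := by
  unfold dE
  apply div_nonneg
  · refine Finset.sum_nonneg fun x _ => Finset.sum_nonneg fun y _ => ?_
    split_ifs
    · exact mul_nonneg (hw _ _) (hw _ _)
    · exact le_rfl
  · refine Finset.sum_nonneg fun x _ => Finset.sum_nonneg fun y _ => ?_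
    split_ifs
    · exact mul_nonneg (hw _ _) (hw _ _)
    · exact le_rfl

lemma dE_le_one (hw : ∀ i x, 0 ≤ w i x) (G : CGraph Ω K₁ K₂) (i j : Fin r)
    (c₂ : K₂) (ci cj : K₁) : dE Ω w G i j c₂ ci cj ≤ 1 := by
  unfold dE
  apply div_le_one_of_le₀
  · refine Finset.sum_le_sum fun x _ => Finset.sum_le_sum fun y _ => ?_
    split_ifs with h1 h2
    · exact le_rfl
    · exact absurd ⟨h1.2.1, h1.2.2⟩ h2
    · exact mul_nonneg (hw _ _) (hw _ _)
    · exact le_rfl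
  · refine Finset.sum_nonneg fun x _ => Finset.sum_nonneg fun y _ => ?_
    split_ifs
    · exact mul_nonneg (hw _ _) (hw _ _)
    · exact le_rfl

lemma dE_symm (G : CGraph Ω K₁ K₂) (i j : Fin r) (c₂ : K₂) (ci cj : K₁) :
    dE Ω w G i j c₂ ci cj = dE Ω w G j i c₂ cj ci := by
  unfold dE
  congr 1
  · rw [Finset.sum_comm]
    refine Finset.sum_congr rfl fun y _ => Finset.sum_congr rfl fun x _ => ?_
    rw [G.eSymm j i y x]
    by_cases hc : G.eCol i j x y = c₂ ∧ G.vCol i x = ci ∧ G.vCol j y = cj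
    · rw [if_pos hc, if_pos ⟨hc.1, hc.2.2, hc.2.1⟩, mul_comm]
    · rw [if_neg hc, if_neg (fun hc' => hc ⟨hc'.1, hc'.2.2, hc'.2.1⟩)]
  · rw [Finset.sum_comm]
    refine Finset.sum_congr rfl fun y _ => Finset.sum_congr rfl fun x _ => ?_
    by_cases hc : G.vCol i x = ci ∧ G.vCol j y = cj
    · rw [if_pos hc, if_pos ⟨hc.2, hc.1⟩, mul_comm]
    · rw [if_neg hc, if_neg (fun hc' => hc ⟨hc'.2, hc'.1⟩)]

lemma dE_unreal (G : CGraph Ω K₁ K₂) {i j : Fin r} {c₂ : K₂} {ci cj : K₁}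
    (hu : ¬ ∃ (x : Ω i) (y : Ω j),
      G.eCol i j x y = c₂ ∧ G.vCol i x = ci ∧ G.vCol j y = cj) :
    dE Ω w G i j c₂ ci cj = 0 := by
  unfold dE
  have hnum : (∑ x : Ω i, ∑ y : Ω j,
      if G.eCol i j x y = c₂ ∧ G.vCol i x = ci ∧ G.vCol j y = cj
        then w i x * w j y else 0) = 0 :=
    Finset.sum_eq_zero fun x _ => Finset.sum_eq_zero fun y _ =>
      if_neg fun hc => hu ⟨x, y, hc⟩
  rw [hnum, zero_div]

/-! #### Complexes: visibility, evaluation lemmas -/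

lemma SComplex.visL {h : ℕ} {S : SComplex r h K₁ K₂} {i j : Fin r} {a b : Fin h}
    (hne : S.eCol i j a b ≠ none) : S.vCol i a ≠ none :=
  fun hv => hne (S.down i j a b hv)

lemma SComplex.visR {h : ℕ} {S : SComplex r h K₁ K₂} {i j : Fin r} {a b : Fin h}
    (hne : S.eCol i j a b ≠ none) : S.vCol j b ≠ none :=
  fun hv => hne (by rw [S.eSymm i j a b]; exact S.down j i b a hv)

lemma mem_V1 {h : ℕ} {S : SComplex r h K₁ K₂} {p : Fin r × Fin h} :
    p ∈ V1 S ↔ S.vCol p.1 p.2 ≠ none := by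
  simp [V1]

lemma mem_V2 {h : ℕ} {S : SComplex r h K₁ K₂} {q : Fin r × Fin r × Fin h × Fin h} :
    q ∈ V2 S ↔ q.1 < q.2.1 ∧ S.eCol q.1 q.2.1 q.2.2.1 q.2.2.2 ≠ none := by
  simp [V2]

lemma dVS_eval (G : CGraph Ω K₁ K₂) {h : ℕ} {S : SComplex r h K₁ K₂}
    {i : Fin r} {a : Fin h} {c : K₁} (h2 : S.vCol i a = some c) :
    dVS Ω w G S (i, a) = dV Ω w G i c := by
  simp [dVS, h2]

lemma dES_eval (G : CGraph Ω K₁ K₂) {h : ℕ} {S : SComplex r h K₁ K₂}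
    {i j : Fin r} {a b : Fin h} {c₂ : K₂} {ci cj : K₁}
    (h1 : S.eCol i j a b = some c₂) (h2 : S.vCol i a = some ci)
    (h3 : S.vCol j b = some cj) :
    dES Ω w G S (i, j, a, b) = dE Ω w G i j c₂ ci cj := by
  simp [dES, h1, h2, h3]

lemma deltaS_eval {δ : Fin r → Fin r → K₂ → K₁ → K₁ → ℝ} {h : ℕ}
    {S : SComplex r h K₁ K₂} {i j : Fin r} {a b : Fin h} {c₂ : K₂} {ci cj : K₁}
    (h1 : S.eCol i j a b = some c₂) (h2 : S.vCol i a = some ci)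
    (h3 : S.vCol j b = some cj) :
    deltaS δ S (i, j, a, b) = δ i j c₂ ci cj := by
  simp [deltaS, h1, h2, h3]

lemma badVS_eval (G : CGraph Ω K₁ K₂) (ε₁ : ℝ) {h : ℕ} {S : SComplex r h K₁ K₂}
    {i : Fin r} {a : Fin h} {c : K₁} (h2 : S.vCol i a = some c) :
    BadVS Ω w G ε₁ S (i, a) ↔ BadV Ω w G ε₁ i c := by
  simp [BadVS, h2]

lemma badES_eval (G : CGraph Ω K₁ K₂) (ε₁ : ℝ) {h : ℕ} {S : SComplex r h K₁ K₂}
    {i j : Fin r} {a b : Fin h} {c₂ : K₂} {ci cj : K₁}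
    (h1 : S.eCol i j a b = some c₂) (h2 : S.vCol i a = some ci)
    (h3 : S.vCol j b = some cj) :
    BadES Ω w G ε₁ S (i, j, a, b) ↔ BadE Ω w G ε₁ i j c₂ ci cj := by
  simp [BadES, h1, h2, h3]

lemma dVS_nonneg (hw : ∀ i x, 0 ≤ w i x) (G : CGraph Ω K₁ K₂) {h : ℕ}
    (S : SComplex r h K₁ K₂) (p : Fin r × Fin h) : 0 ≤ dVS Ω w G S p := by
  unfold dVS
  split
  · exact dV_nonneg hw G _ _
  · exact zero_le_one

lemma dES_nonneg (hw : ∀ i x, 0 ≤ w i x) (G : CGraph Ω K₁ K₂) {h : ℕ}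
    (S : SComplex r h K₁ K₂) (q : Fin r × Fin r × Fin h × Fin h) :
    0 ≤ dES Ω w G S q := by
  unfold dES
  split
  · exact dE_nonneg hw G _ _ _ _ _
  · exact zero_le_one

lemma dES_le_one (hw : ∀ i x, 0 ≤ w i x) (G : CGraph Ω K₁ K₂) {h : ℕ}
    (S : SComplex r h K₁ K₂) (q : Fin r × Fin r × Fin h × Fin h) :
    dES Ω w G S q ≤ 1 := by
  unfold dES
  split
  · exact dE_le_one hw G _ _ _ _ _
  · exact le_rfl

lemma deltaS_nonneg {δ : Fin r → Fin r → K₂ → K₁ → K₁ → ℝ}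
    (hδ0 : ∀ i j c₂ ci cj, 0 ≤ δ i j c₂ ci cj) {h : ℕ}
    (S : SComplex r h K₁ K₂) (q : Fin r × Fin r × Fin h × Fin h) :
    0 ≤ deltaS δ S q := by
  unfold deltaS
  split
  · exact hδ0 _ _ _ _ _
  · exact le_rfl

lemma badE_symm (G : CGraph Ω K₁ K₂) (ε₁ : ℝ) (i j : Fin r) (c₂ : K₂) (ci cj : K₁) :
    BadE Ω w G ε₁ i j c₂ ci cj ↔ BadE Ω w G ε₁ j i c₂ cj ci := by
  unfold BadE
  rw [dE_symm G i j c₂ ci cj, G.c2Symm i j]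
  tauto

lemma badES_symm (G : CGraph Ω K₁ K₂) (ε₁ : ℝ) {h : ℕ} (S : SComplex r h K₁ K₂)
    (i j : Fin r) (a b : Fin h) :
    BadES Ω w G ε₁ S (i, j, a, b) ↔ BadES Ω w G ε₁ S (j, i, b, a) := by
  rcases h1 : S.eCol i j a b with _ | c₂
  · have h1' : S.eCol j i b a = none := by rw [← S.eSymm i j a b]; exact h1
    simp [BadES, h1, h1']
  · have h1' : S.eCol j i b a = some c₂ := by rw [← S.eSymm i j a b]; exact h1
    have hne : S.eCol i j a b ≠ none := by rw [h1]; simp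
    obtain ⟨ci, h2⟩ := Option.ne_none_iff_exists'.mp (SComplex.visL hne)
    obtain ⟨cj, h3⟩ := Option.ne_none_iff_exists'.mp (SComplex.visR hne)
    rw [badES_eval G ε₁ h1 h2 h3, badES_eval G ε₁ h1' h3 h2]
    exact badE_symm G ε₁ i j c₂ ci cj

lemma countProb_eq (G : CGraph Ω K₁ K₂) {h : ℕ} (S : SComplex r h K₁ K₂) :
    countProb Ω w G S = ∑ φ : PMap Ω h, pmapWeight Ω w φ *
      (if vEvent G S φ ∧ eEvent G S φ then (1 : ℝ) else 0) := rfl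

lemma countProb_nonneg (hw : ∀ i x, 0 ≤ w i x) (G : CGraph Ω K₁ K₂) {h : ℕ}
    (S : SComplex r h K₁ K₂) : 0 ≤ countProb Ω w G S := by
  rw [countProb_eq]
  refine Finset.sum_nonneg fun φ _ => mul_nonneg (pmapWeight_nonneg hw φ) ?_
  split_ifs <;> norm_num

/-! #### Pruning a complex: removing bad vertices and bad edges -/

/-- The complex obtained from `S` by making all bad vertices and bad edges
invisible. -/
noncomputable def pruneS (Ω : Fin r → Type) [∀ i, Fintype (Ω i)] (w : ∀ i, Ω i → ℝ)
    (G : CGraph Ω K₁ K₂) (ε₁ : ℝ) {h : ℕ} (S : SComplex r h K₁ K₂) :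
    SComplex r h K₁ K₂ where
  vCol i a := if BadVS Ω w G ε₁ S (i, a) then none else S.vCol i a
  eCol i j a b := if BadES Ω w G ε₁ S (i, j, a, b) ∨ BadES Ω w G ε₁ S (j, i, b, a)
    then none else S.eCol i j a b
  eSymm i j a b := by
    by_cases hc : BadES Ω w G ε₁ S (i, j, a, b) ∨ BadES Ω w G ε₁ S (j, i, b, a)
    · rw [if_pos hc, if_pos (Or.symm hc)]
    · rw [if_neg hc, if_neg (fun hc' => hc (Or.symm hc')), S.eSymm i j a b]
  loopless i a b := by
    have h0 := S.loopless i a b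
    by_cases hc : BadES Ω w G ε₁ S (i, i, a, b) ∨ BadES Ω w G ε₁ S (i, i, b, a)
    · rw [if_pos hc]
    · rw [if_neg hc, h0]
  down i j a b hv := by
    by_cases hb : BadES Ω w G ε₁ S (i, j, a, b) ∨ BadES Ω w G ε₁ S (j, i, b, a)
    · exact if_pos hb
    · rw [if_neg hb]
      by_cases hbv : BadVS Ω w G ε₁ S (i, a)
      · by_contra hne
        obtain ⟨c₂, h1⟩ := Option.ne_none_iff_exists'.mp hne
        obtain ⟨ci, h2⟩ := Option.ne_none_iff_exists'.mp (SComplex.visL hne)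
        obtain ⟨cj, h3⟩ := Option.ne_none_iff_exists'.mp (SComplex.visR hne)
        have hbv' : BadV Ω w G ε₁ i ci := (badVS_eval G ε₁ h2).mp hbv
        exact hb (Or.inl ((badES_eval G ε₁ h1 h2 h3).mpr (Or.inl hbv')))
      · rw [if_neg hbv] at hv
        exact S.down i j a b hv

lemma pruneS_vCol (G : CGraph Ω K₁ K₂) (ε₁ : ℝ) {h : ℕ} (S : SComplex r h K₁ K₂)
    (i : Fin r) (a : Fin h) :
    (pruneS Ω w G ε₁ S).vCol i a
      = if BadVS Ω w G ε₁ S (i, a) then none else S.vCol i a := rfl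

lemma pruneS_eCol (G : CGraph Ω K₁ K₂) (ε₁ : ℝ) {h : ℕ} (S : SComplex r h K₁ K₂)
    (i j : Fin r) (a b : Fin h) :
    (pruneS Ω w G ε₁ S).eCol i j a b
      = if BadES Ω w G ε₁ S (i, j, a, b) ∨ BadES Ω w G ε₁ S (j, i, b, a)
          then none else S.eCol i j a b := rfl

lemma pruneS_eCol_eq (G : CGraph Ω K₁ K₂) (ε₁ : ℝ) {h : ℕ} (S : SComplex r h K₁ K₂)
    {i j : Fin r} {a b : Fin h} (hb : ¬ BadES Ω w G ε₁ S (i, j, a, b)) :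
    (pruneS Ω w G ε₁ S).eCol i j a b = S.eCol i j a b := by
  rw [pruneS_eCol]
  exact if_neg (fun hc => hc.elim hb fun hc' => hb ((badES_symm G ε₁ S i j a b).mpr hc'))

lemma mem_V1_pruneS (G : CGraph Ω K₁ K₂) (ε₁ : ℝ) {h : ℕ} (S : SComplex r h K₁ K₂)
    (p : Fin r × Fin h) :
    p ∈ V1 (pruneS Ω w G ε₁ S) ↔ p ∈ V1 S ∧ ¬ BadVS Ω w G ε₁ S p := by
  obtain ⟨i, a⟩ := p
  rw [mem_V1, mem_V1, pruneS_vCol]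
  by_cases hb : BadVS Ω w G ε₁ S (i, a) <;> simp [hb]

lemma mem_V2_pruneS (G : CGraph Ω K₁ K₂) (ε₁ : ℝ) {h : ℕ} (S : SComplex r h K₁ K₂)
    (q : Fin r × Fin r × Fin h × Fin h) :
    q ∈ V2 (pruneS Ω w G ε₁ S) ↔ q ∈ V2 S ∧ ¬ BadES Ω w G ε₁ S q := by
  obtain ⟨i, j, a, b⟩ := q
  rw [mem_V2, mem_V2, pruneS_eCol]
  by_cases hb : BadES Ω w G ε₁ S (i, j, a, b)
  · simp [hb]
  · have hb2 : ¬ BadES Ω w G ε₁ S (j, i, b, a) :=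
      fun hc => hb ((badES_symm G ε₁ S i j a b).mpr hc)
    simp [hb, hb2]

lemma V1_pruneS (G : CGraph Ω K₁ K₂) (ε₁ : ℝ) {h : ℕ} (S : SComplex r h K₁ K₂) :
    V1 (pruneS Ω w G ε₁ S)
      = V1 S \ (V1 S).filter (fun p => BadVS Ω w G ε₁ S p) := by
  ext p
  rw [mem_V1_pruneS, Finset.mem_sdiff, Finset.mem_filter]
  tauto

lemma V2_pruneS (G : CGraph Ω K₁ K₂) (ε₁ : ℝ) {h : ℕ} (S : SComplex r h K₁ K₂) :
    V2 (pruneS Ω w G ε₁ S)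
      = V2 S \ (V2 S).filter (fun q => BadES Ω w G ε₁ S q) := by
  ext q
  rw [mem_V2_pruneS, Finset.mem_sdiff, Finset.mem_filter]
  tauto

lemma pruneS_MemS (G : CGraph Ω K₁ K₂) (ε₁ : ℝ) {h : ℕ} {S : SComplex r h K₁ K₂}
    (hS : S.MemS G) : (pruneS Ω w G ε₁ S).MemS G := by
  constructor
  · intro i a c hc
    rw [pruneS_vCol] at hc
    by_cases hb : BadVS Ω w G ε₁ S (i, a)
    · rw [if_pos hb] at hc; exact absurd hc (by simp)
    · rw [if_neg hb] at hc; exact hS.1 i a c hc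
  · intro i j a b c hc
    rw [pruneS_eCol] at hc
    by_cases hb : BadES Ω w G ε₁ S (i, j, a, b) ∨ BadES Ω w G ε₁ S (j, i, b, a)
    · rw [if_pos hb] at hc; exact absurd hc (by simp)
    · rw [if_neg hb] at hc; exact hS.2 i j a b c hc

/-- Visible edges of the pruned complex have both endpoint colors unpruned. -/
lemma pruneS_endpoints (G : CGraph Ω K₁ K₂) (ε₁ : ℝ) {h : ℕ} {S : SComplex r h K₁ K₂}
    {i j : Fin r} {a b : Fin h} (hvis : S.eCol i j a b ≠ none)
    (hb : ¬ BadES Ω w G ε₁ S (i, j, a, b)) :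
    ¬ BadVS Ω w G ε₁ S (i, a) ∧ ¬ BadVS Ω w G ε₁ S (j, b) := by
  obtain ⟨c₂, h1⟩ := Option.ne_none_iff_exists'.mp hvis
  obtain ⟨ci, h2⟩ := Option.ne_none_iff_exists'.mp (SComplex.visL hvis)
  obtain ⟨cj, h3⟩ := Option.ne_none_iff_exists'.mp (SComplex.visR hvis)
  constructor
  · intro hbv
    exact hb ((badES_eval G ε₁ h1 h2 h3).mpr (Or.inl ((badVS_eval G ε₁ h2).mp hbv)))
  · intro hbv
    exact hb ((badES_eval G ε₁ h1 h2 h3).mpr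
      (Or.inr (Or.inl ((badVS_eval G ε₁ h3).mp hbv))))

lemma pruneS_noBadV (G : CGraph Ω K₁ K₂) (ε₁ : ℝ) {h : ℕ} (S : SComplex r h K₁ K₂) :
    ∀ p ∈ V1 (pruneS Ω w G ε₁ S), ¬ BadVS Ω w G ε₁ (pruneS Ω w G ε₁ S) p := by
  rintro ⟨i, a⟩ hp
  obtain ⟨hp1, hp2⟩ := (mem_V1_pruneS G ε₁ S (i, a)).mp hp
  have hcol : (pruneS Ω w G ε₁ S).vCol i a = S.vCol i a := by
    rw [pruneS_vCol, if_neg hp2]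
  obtain ⟨c, hc⟩ := Option.ne_none_iff_exists'.mp (mem_V1.mp hp1)
  have hc' : (pruneS Ω w G ε₁ S).vCol i a = some c := by rw [hcol]; exact hc
  rw [badVS_eval G ε₁ hc']
  exact fun hb => hp2 ((badVS_eval G ε₁ hc).mpr hb)

lemma pruneS_noBadE (G : CGraph Ω K₁ K₂) (ε₁ : ℝ) {h : ℕ} (S : SComplex r h K₁ K₂) :
    ∀ q ∈ V2 (pruneS Ω w G ε₁ S), ¬ BadES Ω w G ε₁ (pruneS Ω w G ε₁ S) q := by
  rintro ⟨i, j, a, b⟩ hq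
  obtain ⟨hq1, hq2⟩ := (mem_V2_pruneS G ε₁ S (i, j, a, b)).mp hq
  have hvis : S.eCol i j a b ≠ none := (mem_V2.mp hq1).2
  obtain ⟨c₂, h1⟩ := Option.ne_none_iff_exists'.mp hvis
  obtain ⟨ci, h2⟩ := Option.ne_none_iff_exists'.mp (SComplex.visL hvis)
  obtain ⟨cj, h3⟩ := Option.ne_none_iff_exists'.mp (SComplex.visR hvis)
  obtain ⟨hbi, hbj⟩ := pruneS_endpoints G ε₁ hvis hq2
  have h1' : (pruneS Ω w G ε₁ S).eCol i j a b = some c₂ := by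
    rw [pruneS_eCol_eq G ε₁ S hq2]; exact h1
  have h2' : (pruneS Ω w G ε₁ S).vCol i a = some ci := by
    rw [pruneS_vCol, if_neg hbi]; exact h2
  have h3' : (pruneS Ω w G ε₁ S).vCol j b = some cj := by
    rw [pruneS_vCol, if_neg hbj]; exact h3
  rw [badES_eval G ε₁ h1' h2' h3']
  exact fun hb => hq2 ((badES_eval G ε₁ h1 h2 h3).mpr hb)

lemma dVS_pruneS (G : CGraph Ω K₁ K₂) (ε₁ : ℝ) {h : ℕ} (S : SComplex r h K₁ K₂)
    {p : Fin r × Fin h} (hp : p ∈ V1 (pruneS Ω w G ε₁ S)) :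
    dVS Ω w G (pruneS Ω w G ε₁ S) p = dVS Ω w G S p := by
  obtain ⟨i, a⟩ := p
  obtain ⟨_, hp2⟩ := (mem_V1_pruneS G ε₁ S (i, a)).mp hp
  unfold dVS
  rw [pruneS_vCol, if_neg hp2]

lemma dES_pruneS (G : CGraph Ω K₁ K₂) (ε₁ : ℝ) {h : ℕ} (S : SComplex r h K₁ K₂)
    {q : Fin r × Fin r × Fin h × Fin h} (hq : q ∈ V2 (pruneS Ω w G ε₁ S)) :
    dES Ω w G (pruneS Ω w G ε₁ S) q = dES Ω w G S q := by
  obtain ⟨i, j, a, b⟩ := q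
  obtain ⟨hq1, hq2⟩ := (mem_V2_pruneS G ε₁ S (i, j, a, b)).mp hq
  have hvis : S.eCol i j a b ≠ none := (mem_V2.mp hq1).2
  obtain ⟨hbi, hbj⟩ := pruneS_endpoints G ε₁ hvis hq2
  unfold dES
  rw [pruneS_eCol_eq G ε₁ S hq2, pruneS_vCol, if_neg hbi, pruneS_vCol, if_neg hbj]

lemma deltaS_pruneS {δ : Fin r → Fin r → K₂ → K₁ → K₁ → ℝ} (G : CGraph Ω K₁ K₂)
    (ε₁ : ℝ) {h : ℕ} (S : SComplex r h K₁ K₂)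
    {q : Fin r × Fin r × Fin h × Fin h} (hq : q ∈ V2 (pruneS Ω w G ε₁ S)) :
    deltaS δ (pruneS Ω w G ε₁ S) q = deltaS δ S q := by
  obtain ⟨i, j, a, b⟩ := q
  obtain ⟨hq1, hq2⟩ := (mem_V2_pruneS G ε₁ S (i, j, a, b)).mp hq
  have hvis : S.eCol i j a b ≠ none := (mem_V2.mp hq1).2
  obtain ⟨hbi, hbj⟩ := pruneS_endpoints G ε₁ hvis hq2
  unfold deltaS
  rw [pruneS_eCol_eq G ε₁ S hq2, pruneS_vCol, if_neg hbi, pruneS_vCol, if_neg hbj]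

/-! #### Events, independence, and the key factorization -/

lemma vEvent_updP (G : CGraph Ω K₁ K₂) {h : ℕ} {R : SComplex r h K₁ K₂}
    {i₀ : Fin r} {a₀ : Fin h} (hv : R.vCol i₀ a₀ = none) (x : Ω i₀) (φ : PMap Ω h) :
    vEvent G R (updP i₀ a₀ x φ) ↔ vEvent G R φ := by
  have key : ∀ p ∈ V1 R, updP i₀ a₀ x φ p.1 p.2 = φ p.1 p.2 := by
    intro p hp
    refine updP_ne ?_ x φ
    intro hc
    have h1 : p.1 = i₀ := congrArg Prod.fst hc
    have h2 : p.2 = a₀ := congrArg Prod.snd hc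
    have h3 := mem_V1.mp hp
    rw [h1, h2] at h3
    exact h3 hv
  unfold vEvent
  constructor <;> intro H p hp
  · rw [← key p hp]; exact H p hp
  · rw [key p hp]; exact H p hp

lemma eEvent_updP (G : CGraph Ω K₁ K₂) {h : ℕ} {R : SComplex r h K₁ K₂}
    {i₀ : Fin r} {a₀ : Fin h} (hv : R.vCol i₀ a₀ = none) (x : Ω i₀) (φ : PMap Ω h) :
    eEvent G R (updP i₀ a₀ x φ) ↔ eEvent G R φ := by
  have keyL : ∀ q ∈ V2 R, updP i₀ a₀ x φ q.1 q.2.2.1 = φ q.1 q.2.2.1 := by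
    intro q hq
    refine updP_ne ?_ x φ
    intro hc
    have h1 : q.1 = i₀ := congrArg Prod.fst hc
    have h2 : q.2.2.1 = a₀ := congrArg Prod.snd hc
    have h3 := SComplex.visL (mem_V2.mp hq).2
    rw [h1, h2] at h3
    exact h3 hv
  have keyR : ∀ q ∈ V2 R, updP i₀ a₀ x φ q.2.1 q.2.2.2 = φ q.2.1 q.2.2.2 := by
    intro q hq
    refine updP_ne ?_ x φ
    intro hc
    have h1 : q.2.1 = i₀ := congrArg Prod.fst hc
    have h2 : q.2.2.2 = a₀ := congrArg Prod.snd hc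
    have h3 := SComplex.visR (mem_V2.mp hq).2
    rw [h1, h2] at h3
    exact h3 hv
  unfold eEvent
  constructor <;> intro H q hq
  · rw [← keyL q hq, ← keyR q hq]; exact H q hq
  · rw [keyL q hq, keyR q hq]; exact H q hq

lemma event_forward (G : CGraph Ω K₁ K₂) (ε₁ : ℝ) {h : ℕ} {S : SComplex r h K₁ K₂}
    {φ : PMap Ω h} (hE : vEvent G S φ ∧ eEvent G S φ) :
    (vEvent G (pruneS Ω w G ε₁ S) φ ∧ eEvent G (pruneS Ω w G ε₁ S) φ) ∧
      ∀ p ∈ (V1 S).filter (fun p => BadVS Ω w G ε₁ S p),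
        some (G.vCol p.1 (φ p.1 p.2)) = S.vCol p.1 p.2 := by
  obtain ⟨hv, he⟩ := hE
  refine ⟨⟨?_, ?_⟩, ?_⟩
  · rintro ⟨i, a⟩ hp
    obtain ⟨hp1, hp2⟩ := (mem_V1_pruneS G ε₁ S (i, a)).mp hp
    have hcol : (pruneS Ω w G ε₁ S).vCol i a = S.vCol i a := by
      rw [pruneS_vCol, if_neg hp2]
    rw [hcol]
    exact hv (i, a) hp1
  · rintro ⟨i, j, a, b⟩ hq
    obtain ⟨hq1, hq2⟩ := (mem_V2_pruneS G ε₁ S (i, j, a, b)).mp hq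
    rw [pruneS_eCol_eq G ε₁ S hq2]
    exact he (i, j, a, b) hq1
  · intro p hp
    exact hv p (Finset.mem_of_mem_filter p hp)

lemma event_backward (G : CGraph Ω K₁ K₂) (ε₁ : ℝ) {h : ℕ} {S : SComplex r h K₁ K₂}
    {φ : PMap Ω h} (hgood : ∀ q ∈ V2 S, ¬ BadES Ω w G ε₁ S q)
    (hP : vEvent G (pruneS Ω w G ε₁ S) φ ∧ eEvent G (pruneS Ω w G ε₁ S) φ)
    (hB : ∀ p ∈ (V1 S).filter (fun p => BadVS Ω w G ε₁ S p),
      some (G.vCol p.1 (φ p.1 p.2)) = S.vCol p.1 p.2) :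
    vEvent G S φ ∧ eEvent G S φ := by
  obtain ⟨hv, he⟩ := hP
  constructor
  · intro p hp
    by_cases hb : BadVS Ω w G ε₁ S p
    · exact hB p (Finset.mem_filter.mpr ⟨hp, hb⟩)
    · obtain ⟨i, a⟩ := p
      have hp' : (i, a) ∈ V1 (pruneS Ω w G ε₁ S) :=
        (mem_V1_pruneS G ε₁ S (i, a)).mpr ⟨hp, hb⟩
      have := hv (i, a) hp'
      rwa [pruneS_vCol, if_neg hb] at this
  · intro q hq
    obtain ⟨i, j, a, b⟩ := q
    have hnb := hgood (i, j, a, b) hq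
    have hq' : (i, j, a, b) ∈ V2 (pruneS Ω w G ε₁ S) :=
      (mem_V2_pruneS G ε₁ S (i, j, a, b)).mpr ⟨hq, hnb⟩
    have := he (i, j, a, b) hq'
    rwa [pruneS_eCol_eq G ε₁ S hnb] at this

lemma keyA (hw : ∀ i x, 0 ≤ w i x) (htot : ∀ i, ∑ x : Ω i, w i x = 1)
    (G : CGraph Ω K₁ K₂) (ε₁ : ℝ) {h : ℕ} (S : SComplex r h K₁ K₂) :
    ∑ φ : PMap Ω h, pmapWeight Ω w φ *
      ((if vEvent G (pruneS Ω w G ε₁ S) φ ∧ eEvent G (pruneS Ω w G ε₁ S) φ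
          then (1 : ℝ) else 0) *
        ∏ p ∈ (V1 S).filter (fun p => BadVS Ω w G ε₁ S p),
          (if some (G.vCol p.1 (φ p.1 p.2)) = S.vCol p.1 p.2 then (1 : ℝ) else 0)) =
    countProb Ω w G (pruneS Ω w G ε₁ S) *
      ∏ p ∈ (V1 S).filter (fun p => BadVS Ω w G ε₁ S p), dVS Ω w G S p := by
  have hH : ∀ p ∈ (V1 S).filter (fun p => BadVS Ω w G ε₁ S p),
      ∀ (φ : PMap Ω h) (x : Ω p.1),
        (if vEvent G (pruneS Ω w G ε₁ S) (updP p.1 p.2 x φ) ∧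
            eEvent G (pruneS Ω w G ε₁ S) (updP p.1 p.2 x φ) then (1 : ℝ) else 0) =
          (if vEvent G (pruneS Ω w G ε₁ S) φ ∧ eEvent G (pruneS Ω w G ε₁ S) φ
            then (1 : ℝ) else 0) := by
    rintro ⟨i, a⟩ hp φ x
    have hb : BadVS Ω w G ε₁ S (i, a) := (Finset.mem_filter.mp hp).2
    have hnone : (pruneS Ω w G ε₁ S).vCol i a = none := by
      rw [pruneS_vCol, if_pos hb]
    exact if_congr (and_congr (vEvent_updP G hnone x φ) (eEvent_updP G hnone x φ))
      rfl rfl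
  calc
    ∑ φ : PMap Ω h, pmapWeight Ω w φ *
        ((if vEvent G (pruneS Ω w G ε₁ S) φ ∧ eEvent G (pruneS Ω w G ε₁ S) φ
            then (1 : ℝ) else 0) *
          ∏ p ∈ (V1 S).filter (fun p => BadVS Ω w G ε₁ S p),
            (if some (G.vCol p.1 (φ p.1 p.2)) = S.vCol p.1 p.2 then (1 : ℝ) else 0))
        = (∑ φ : PMap Ω h, pmapWeight Ω w φ *
            (if vEvent G (pruneS Ω w G ε₁ S) φ ∧ eEvent G (pruneS Ω w G ε₁ S) φ
              then (1 : ℝ) else 0)) *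
          ∏ p ∈ (V1 S).filter (fun p => BadVS Ω w G ε₁ S p),
            ∑ x : Ω p.1, w p.1 x *
              (if some (G.vCol p.1 x) = S.vCol p.1 p.2 then (1 : ℝ) else 0) :=
      multi_fubini htot _ _
        (fun p x => if some (G.vCol p.1 x) = S.vCol p.1 p.2 then (1 : ℝ) else 0) hH
    _ = countProb Ω w G (pruneS Ω w G ε₁ S) *
        ∏ p ∈ (V1 S).filter (fun p => BadVS Ω w G ε₁ S p), dVS Ω w G S p := ?_
  congr 1
  refine Finset.prod_congr rfl fun p hp => ?_
  obtain ⟨i, a⟩ := p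
  have hp1 : (i, a) ∈ V1 S := (Finset.mem_filter.mp hp).1
  obtain ⟨c, hc⟩ := Option.ne_none_iff_exists'.mp (mem_V1.mp hp1)
  rw [dVS_eval G hc]
  unfold dV
  refine Finset.sum_congr rfl fun x _ => ?_
  rw [hc]
  by_cases hx : G.vCol i x = c <;> simp [hx]

lemma countProb_le_pruneS (hw : ∀ i x, 0 ≤ w i x)
    (htot : ∀ i, ∑ x : Ω i, w i x = 1) (G : CGraph Ω K₁ K₂) (ε₁ : ℝ) {h : ℕ}
    (S : SComplex r h K₁ K₂) :
    countProb Ω w G S ≤ countProb Ω w G (pruneS Ω w G ε₁ S) *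
      ∏ p ∈ (V1 S).filter (fun p => BadVS Ω w G ε₁ S p), dVS Ω w G S p := by
  rw [← keyA hw htot G ε₁ S, countProb_eq]
  refine Finset.sum_le_sum fun φ _ => mul_le_mul_of_nonneg_left ?_
    (pmapWeight_nonneg hw φ)
  by_cases hEv : vEvent G S φ ∧ eEvent G S φ
  · obtain ⟨hP, hB⟩ := event_forward G ε₁ hEv
    rw [if_pos hEv, if_pos hP,
      Finset.prod_congr rfl (fun p hp => if_pos (hB p hp)), Finset.prod_const_one,
      mul_one]
  · rw [if_neg hEv]
    refine mul_nonneg ?_ (Finset.prod_nonneg fun p _ => ?_) <;> split_ifs <;> norm_num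

lemma countProb_eq_pruneS (hw : ∀ i x, 0 ≤ w i x)
    (htot : ∀ i, ∑ x : Ω i, w i x = 1) (G : CGraph Ω K₁ K₂) (ε₁ : ℝ) {h : ℕ}
    (S : SComplex r h K₁ K₂) (hgood : ∀ q ∈ V2 S, ¬ BadES Ω w G ε₁ S q) :
    countProb Ω w G S = countProb Ω w G (pruneS Ω w G ε₁ S) *
      ∏ p ∈ (V1 S).filter (fun p => BadVS Ω w G ε₁ S p), dVS Ω w G S p := by
  rw [← keyA hw htot G ε₁ S, countProb_eq]
  refine Finset.sum_congr rfl fun φ _ => ?_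
  congr 1
  by_cases hEv : vEvent G S φ ∧ eEvent G S φ
  · obtain ⟨hP, hB⟩ := event_forward G ε₁ hEv
    rw [if_pos hEv, if_pos hP,
      Finset.prod_congr rfl (fun p hp => if_pos (hB p hp)), Finset.prod_const_one,
      mul_one]
  · rw [if_neg hEv]
    by_cases hP : vEvent G (pruneS Ω w G ε₁ S) φ ∧ eEvent G (pruneS Ω w G ε₁ S) φ
    · by_cases hB : ∀ p ∈ (V1 S).filter (fun p => BadVS Ω w G ε₁ S p),
          some (G.vCol p.1 (φ p.1 p.2)) = S.vCol p.1 p.2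
      · exact absurd (event_backward G ε₁ hgood hP hB) hEv
      · push_neg at hB
        obtain ⟨p, hp, hnp⟩ := hB
        rw [if_pos hP, one_mul]
        exact (Finset.prod_eq_zero (f := fun p => if some (G.vCol p.1 (φ p.1 p.2))
          = S.vCol p.1 p.2 then (1 : ℝ) else 0) hp (if_neg hnp)).symm
    · rw [if_neg hP, zero_mul]

lemma deltaS_eq_one {δ : Fin r → Fin r → K₂ → K₁ → K₁ → ℝ} (G : CGraph Ω K₁ K₂)
    (ε₁ : ℝ)
    (hδbad : ∀ (i j : Fin r), i ≠ j → ∀ (x : Ω i) (y : Ω j),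
      BadE Ω w G ε₁ i j (G.eCol i j x y) (G.vCol i x) (G.vCol j y) →
        δ i j (G.eCol i j x y) (G.vCol i x) (G.vCol j y) = 1)
    {h : ℕ} {S : SComplex r h K₁ K₂} {q : Fin r × Fin r × Fin h × Fin h}
    (hqV : q ∈ V2 S) (hqB : BadES Ω w G ε₁ S q)
    (hreal : ∃ x : Ω q.1, ∃ y : Ω q.2.1,
      some (G.eCol q.1 q.2.1 x y) = S.eCol q.1 q.2.1 q.2.2.1 q.2.2.2 ∧
      some (G.vCol q.1 x) = S.vCol q.1 q.2.2.1 ∧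
      some (G.vCol q.2.1 y) = S.vCol q.2.1 q.2.2.2) :
    deltaS δ S q = 1 := by
  obtain ⟨i, j, a, b⟩ := q
  obtain ⟨x, y, hxy, hx, hy⟩ := hreal
  have hij : i < j := (mem_V2.mp hqV).1
  have h1 : S.eCol i j a b = some (G.eCol i j x y) := hxy.symm
  have h2 : S.vCol i a = some (G.vCol i x) := hx.symm
  have h3 : S.vCol j b = some (G.vCol j y) := hy.symm
  rw [deltaS_eval h1 h2 h3]
  exact hδbad i j (ne_of_lt hij) x y ((badES_eval G ε₁ h1 h2 h3).mp hqB)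

end Stmt13Aux

/-- reduction to complexes without bad edges. Suppose
`δ ≥ 0` equals `1` on every bad total color of `TC₂(G*)` (vertex total colors
carry error `0`, as in the counting equation). If the counting equation holds
for every `S ∈ S_{h,G*}` none of whose visible edges has a bad total color, then
it holds for every `S ∈ S_{h,G*}`. -/
theorem counting_reduction_to_good {r : ℕ} (Ω : Fin r → Type)
    [∀ i, Fintype (Ω i)] [∀ i, Nonempty (Ω i)] (w : ∀ i, Ω i → ℝ)
    (hw : ∀ i x, 0 ≤ w i x) (htot : ∀ i, ∑ x : Ω i, w i x = 1)
    {K₁ K₂ : Type} (G : CGraph Ω K₁ K₂) (h : ℕ) (hh : 1 ≤ h)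
    (b₂ : ℕ) (hb₂ : 1 ≤ b₂) (ε : ℝ) (hε : 0 < ε)
    (δ : Fin r → Fin r → K₂ → K₁ → K₁ → ℝ)
    (hδ0 : ∀ i j c₂ ci cj, 0 ≤ δ i j c₂ ci cj)
    (hδbad : ∀ (i j : Fin r), i ≠ j → ∀ (x : Ω i) (y : Ω j),
      BadE Ω w G (eps1 r b₂ ε) i j (G.eCol i j x y) (G.vCol i x) (G.vCol j y) →
        δ i j (G.eCol i j x y) (G.vCol i x) (G.vCol j y) = 1)
    (hcount : ∀ S : SComplex r h K₁ K₂, S.MemS G →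
      (∀ p ∈ V1 S, ¬ BadVS Ω w G (eps1 r b₂ ε) S p) →
      (∀ q ∈ V2 S, ¬ BadES Ω w G (eps1 r b₂ ε) S q) →
      CountEqAt Ω w G δ S) :
    IsErrorFun Ω w G h δ := by
  intro S hS
  classical
  obtain ⟨c'', hc''iv, hc''eq⟩ :=
    hcount (pruneS Ω w G (eps1 r b₂ ε) S)
      (pruneS_MemS (w := w) G (eps1 r b₂ ε) hS)
      (pruneS_noBadV (w := w) G (eps1 r b₂ ε) S)
      (pruneS_noBadE (w := w) G (eps1 r b₂ ε) S)
  have hV1P := V1_pruneS (w := w) G (eps1 r b₂ ε) S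
  have hV2P := V2_pruneS (w := w) G (eps1 r b₂ ε) S
  have hdVSsplit :
      (∏ p ∈ V1 (pruneS Ω w G (eps1 r b₂ ε) S),
        dVS Ω w G (pruneS Ω w G (eps1 r b₂ ε) S) p) *
      ∏ p ∈ (V1 S).filter (fun p => BadVS Ω w G (eps1 r b₂ ε) S p),
        dVS Ω w G S p
      = ∏ p ∈ V1 S, dVS Ω w G S p := by
    rw [Finset.prod_congr rfl
      (fun p hp => dVS_pruneS (w := w) G (eps1 r b₂ ε) S hp), hV1P]
    exact Finset.prod_sdiff (Finset.filter_subset _ _)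
  by_cases hU : ∀ q ∈ V2 S, ∃ x : Ω q.1, ∃ y : Ω q.2.1,
      some (G.eCol q.1 q.2.1 x y) = S.eCol q.1 q.2.1 q.2.2.1 q.2.2.2 ∧
      some (G.vCol q.1 x) = S.vCol q.1 q.2.2.1 ∧
      some (G.vCol q.2.1 y) = S.vCol q.2.1 q.2.2.2
  · by_cases hgoodAll : ∀ q ∈ V2 S, ¬ BadES Ω w G (eps1 r b₂ ε) S q
    · -- no bad edges at all: prune only removes (isolated) bad vertices
      have hV2eq : V2 (pruneS Ω w G (eps1 r b₂ ε) S) = V2 S := by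
        ext q
        rw [mem_V2_pruneS]
        exact ⟨fun hq => hq.1, fun hq => ⟨hq, hgoodAll q hq⟩⟩
      refine ⟨c'', ?_, ?_⟩
      · intro q hq
        have hq' : q ∈ V2 (pruneS Ω w G (eps1 r b₂ ε) S) := by rw [hV2eq]; exact hq
        have hiv := hc''iv q hq'
        rwa [dES_pruneS (w := w) G (eps1 r b₂ ε) S hq',
          deltaS_pruneS (w := w) G (eps1 r b₂ ε) S hq'] at hiv
      · rw [countProb_eq_pruneS hw htot G (eps1 r b₂ ε) S hgoodAll, hc''eq, hV2eq,
          ← hdVSsplit]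
        ring
    · -- there is a bad visible edge q₀ : put all the slack there
      have hex : ∃ q ∈ V2 S, BadES Ω w G (eps1 r b₂ ε) S q := by
        by_contra hc
        push_neg at hc
        exact hgoodAll hc
      obtain ⟨q₀, hq₀V, hq₀B⟩ := hex
      have hq₀Be : q₀ ∈ (V2 S).filter (fun q => BadES Ω w G (eps1 r b₂ ε) S q) :=
        Finset.mem_filter.mpr ⟨hq₀V, hq₀B⟩
      set A : ℝ := (∏ p ∈ V1 S, dVS Ω w G S p) * ∏ q ∈ (V2 S).erase q₀,
        (if BadES Ω w G (eps1 r b₂ ε) S q then (1 : ℝ) else c'' q) with hAdef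
      have hAeqA : A = countProb Ω w G (pruneS Ω w G (eps1 r b₂ ε) S) *
          ∏ p ∈ (V1 S).filter (fun p => BadVS Ω w G (eps1 r b₂ ε) S p),
            dVS Ω w G S p := by
        have hsub : ((V2 S).filter (fun q => BadES Ω w G (eps1 r b₂ ε) S q)).erase q₀
            ⊆ (V2 S).erase q₀ :=
          Finset.erase_subset_erase _ (Finset.filter_subset _ _)
        have hsd : (V2 S).erase q₀ \
            ((V2 S).filter (fun q => BadES Ω w G (eps1 r b₂ ε) S q)).erase q₀
            = V2 S \ (V2 S).filter (fun q => BadES Ω w G (eps1 r b₂ ε) S q) := by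
          ext q
          constructor
          · intro hqm
            obtain ⟨hq1, hq2⟩ := Finset.mem_sdiff.mp hqm
            obtain ⟨hne, hqV⟩ := Finset.mem_erase.mp hq1
            exact Finset.mem_sdiff.mpr
              ⟨hqV, fun hqf => hq2 (Finset.mem_erase.mpr ⟨hne, hqf⟩)⟩
          · intro hqm
            obtain ⟨hqV, hqf⟩ := Finset.mem_sdiff.mp hqm
            have hne : q ≠ q₀ := fun hc => hqf (hc ▸ hq₀Be)
            exact Finset.mem_sdiff.mpr ⟨Finset.mem_erase.mpr ⟨hne, hqV⟩,
              fun hc => hqf (Finset.mem_of_mem_erase hc)⟩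
        have hprodsplit : ∏ q ∈ (V2 S).erase q₀,
            (if BadES Ω w G (eps1 r b₂ ε) S q then (1 : ℝ) else c'' q)
            = (∏ q ∈ V2 S \ (V2 S).filter (fun q => BadES Ω w G (eps1 r b₂ ε) S q),
                (if BadES Ω w G (eps1 r b₂ ε) S q then (1 : ℝ) else c'' q)) *
              ∏ q ∈ ((V2 S).filter (fun q => BadES Ω w G (eps1 r b₂ ε) S q)).erase q₀,
                (if BadES Ω w G (eps1 r b₂ ε) S q then (1 : ℝ) else c'' q) := by
          rw [← Finset.prod_sdiff hsub, hsd]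
        have h1 : ∏ q ∈ ((V2 S).filter
              (fun q => BadES Ω w G (eps1 r b₂ ε) S q)).erase q₀,
            (if BadES Ω w G (eps1 r b₂ ε) S q then (1 : ℝ) else c'' q) = 1 :=
          Finset.prod_eq_one fun q hq =>
            if_pos (Finset.mem_filter.mp (Finset.mem_of_mem_erase hq)).2
        have h2 : ∏ q ∈ V2 S \ (V2 S).filter (fun q => BadES Ω w G (eps1 r b₂ ε) S q),
            (if BadES Ω w G (eps1 r b₂ ε) S q then (1 : ℝ) else c'' q)
            = ∏ q ∈ V2 (pruneS Ω w G (eps1 r b₂ ε) S), c'' q := by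
          rw [hV2P]
          refine Finset.prod_congr rfl fun q hq => ?_
          obtain ⟨hqV, hqnf⟩ := Finset.mem_sdiff.mp hq
          exact if_neg fun hb => hqnf (Finset.mem_filter.mpr ⟨hqV, hb⟩)
        rw [hAdef, hprodsplit, h1, h2, mul_one, hc''eq, ← hdVSsplit]
        ring
      have hCle : countProb Ω w G S ≤ A := by
        rw [hAeqA]
        exact countProb_le_pruneS hw htot G (eps1 r b₂ ε) S
      have hA0 : 0 ≤ A := by
        rw [hAeqA]
        exact mul_nonneg (countProb_nonneg hw G _)
          (Finset.prod_nonneg fun p _ => dVS_nonneg hw G S p)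
      set cq0 : ℝ := if A = 0 then 0 else countProb Ω w G S / A with hcq0def
      have h01 : 0 ≤ cq0 ∧ cq0 ≤ 1 := by
        rw [hcq0def]
        split_ifs with h0
        · norm_num
        · have hApos : 0 < A := lt_of_le_of_ne hA0 (Ne.symm h0)
          exact ⟨div_nonneg (countProb_nonneg hw G S) hA0,
            (div_le_one hApos).mpr hCle⟩
      refine ⟨fun q => if q = q₀ then cq0 else
          if BadES Ω w G (eps1 r b₂ ε) S q then 1 else c'' q, ?_, ?_⟩
      · intro q hq
        dsimp only
        by_cases hqq : q = q₀
        · subst hqq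
          rw [if_pos rfl]
          have hδ1 : deltaS δ S q = 1 :=
            deltaS_eq_one G (eps1 r b₂ ε) hδbad hq₀V hq₀B (hU q hq₀V)
          have hd1 := dES_le_one hw G S q
          have hd0 := dES_nonneg hw G S q
          rw [hδ1]
          exact ⟨max_le h01.1 (by linarith), le_min h01.2 (by linarith)⟩
        · rw [if_neg hqq]
          by_cases hb : BadES Ω w G (eps1 r b₂ ε) S q
          · rw [if_pos hb]
            have hδ1 : deltaS δ S q = 1 :=
              deltaS_eq_one G (eps1 r b₂ ε) hδbad hq hb (hU q hq)
            have hd1 := dES_le_one hw G S q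
            have hd0 := dES_nonneg hw G S q
            rw [hδ1]
            exact ⟨max_le zero_le_one (by linarith), le_min le_rfl (by linarith)⟩
          · rw [if_neg hb]
            have hq' : q ∈ V2 (pruneS Ω w G (eps1 r b₂ ε) S) :=
              (mem_V2_pruneS (w := w) G (eps1 r b₂ ε) S q).mpr ⟨hq, hb⟩
            have hiv := hc''iv q hq'
            rwa [dES_pruneS (w := w) G (eps1 r b₂ ε) S hq',
              deltaS_pruneS (w := w) G (eps1 r b₂ ε) S hq'] at hiv
      · have hprod : ∏ q ∈ V2 S, (if q = q₀ then cq0 else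
            if BadES Ω w G (eps1 r b₂ ε) S q then 1 else c'' q)
            = cq0 * ∏ q ∈ (V2 S).erase q₀,
                (if BadES Ω w G (eps1 r b₂ ε) S q then (1 : ℝ) else c'' q) := by
          rw [← Finset.mul_prod_erase _ _ hq₀V, if_pos rfl]
          congr 1
          refine Finset.prod_congr rfl fun q hq => ?_
          rw [if_neg (Finset.mem_erase.mp hq).1]
        rw [hprod]
        by_cases h0 : A = 0
        · have hcp0 : countProb Ω w G S = 0 :=
            le_antisymm (hCle.trans_eq h0) (countProb_nonneg hw G S)
          have hc0 : cq0 = 0 := by rw [hcq0def, if_pos h0]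
          rw [hcp0, hc0]
          ring
        · have hc0 : cq0 = countProb Ω w G S / A := by rw [hcq0def, if_neg h0]
          calc countProb Ω w G S = countProb Ω w G S / A * A :=
                (div_mul_cancel₀ _ h0).symm
            _ = (∏ p ∈ V1 S, dVS Ω w G S p) * (cq0 * ∏ q ∈ (V2 S).erase q₀,
                  (if BadES Ω w G (eps1 r b₂ ε) S q then (1 : ℝ) else c'' q)) := by
                rw [hc0, hAdef]
                ring
  · -- some visible edge of S has an unrealizable total color: probability 0
    simp only [not_forall] at hU
    obtain ⟨q₀, hq₀V, hq₀n⟩ := hU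
    obtain ⟨i, j, a, b⟩ := q₀
    have hvis : S.eCol i j a b ≠ none := (mem_V2.mp hq₀V).2
    obtain ⟨c₂, h1⟩ := Option.ne_none_iff_exists'.mp hvis
    obtain ⟨ci, h2⟩ := Option.ne_none_iff_exists'.mp (SComplex.visL hvis)
    obtain ⟨cj, h3⟩ := Option.ne_none_iff_exists'.mp (SComplex.visR hvis)
    have hd0 : dES Ω w G S (i, j, a, b) = 0 := by
      rw [dES_eval G h1 h2 h3]
      refine dE_unreal G ?_
      rintro ⟨x, y, hxy, hx, hy⟩
      exact hq₀n ⟨x, y, by rw [hxy, h1], by rw [hx, h2], by rw [hy, h3]⟩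
    have hcp0 : countProb Ω w G S = 0 := by
      rw [countProb_eq]
      refine Finset.sum_eq_zero fun φ _ => ?_
      have hne : ¬ (vEvent G S φ ∧ eEvent G S φ) := by
        rintro ⟨hv, he⟩
        have hia : (i, a) ∈ V1 S := mem_V1.mpr (SComplex.visL hvis)
        have hjb : (j, b) ∈ V1 S := mem_V1.mpr (SComplex.visR hvis)
        exact hq₀n ⟨φ i a, φ j b, he (i, j, a, b) hq₀V, hv (i, a) hia,
          hv (j, b) hjb⟩
      rw [if_neg hne, mul_zero]
    refine ⟨fun q => if q = (i, j, a, b) then 0 else dES Ω w G S q, ?_, ?_⟩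
    · intro q hq
      dsimp only
      by_cases hqq : q = (i, j, a, b)
      · subst hqq
        rw [if_pos rfl, hd0]
        have hδ0' := deltaS_nonneg hδ0 S (i, j, a, b)
        constructor
        · exact max_le le_rfl (by linarith)
        · exact le_min (by norm_num) (by linarith)
      · rw [if_neg hqq]
        exact ⟨max_le (dES_nonneg hw G S q) (sub_le_self _ (deltaS_nonneg hδ0 S q)),
          le_min (dES_le_one hw G S q)
            (le_add_of_nonneg_right (deltaS_nonneg hδ0 S q))⟩
    · rw [hcp0, Finset.prod_eq_zero (f := fun q => if q = (i, j, a, b) then (0 : ℝ)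
        else dES Ω w G S q) hq₀V (if_pos rfl), mul_zero]
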